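/- Let γ ∈ (-1,0) with γ > -1/(n-1), and positive integers s_1,…,s_j with ∑_{k=1}^j s_k = m and λ_k = γ s_k - 2γ + 2 > 0. Then ∑_{k=1}^j s_k/λ_k ≤ (j-1)/(2-γ) + (m-j+1)/(γ(m-j+1) - 2γ + 2); that is, for negative γ the sum ∑ s_k/λ_k is maximized over integer partitions of m into j parts when j-1 parts equal 1 and one part equals m-(j-1). -/

import Mathlib

open Finset

lemma secant_aux (γ t M : ℝ) (hγ : γ < 0) (ht1 : 1 ≤ t) (htM : t ≤ M) (hM : 1 < M)
    (hdt : 0 < γ*t - 2*γ + 2) (hd1 : 0 < 2 - γ) (hdM : 0 < γ*M - 2*γ + 2) :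
    t/(γ*t-2*γ+2) ≤ (M-t)/(M-1) * (1/(2-γ)) + (t-1)/(M-1) * (M/(γ*M-2*γ+2)) := by
  have hγne : γ ≠ 0 := ne_of_lt hγ
  have hM1 : M - 1 ≠ 0 := by linarith
  have h1 : (2 - γ) ≠ 0 := ne_of_gt hd1
  have h2 : (γ*M - 2*γ + 2) ≠ 0 := ne_of_gt hdM
  have h3 : (γ*t - 2*γ + 2) ≠ 0 := ne_of_gt hdt
  have key : (M-t)/(M-1) * (1/(2-γ)) + (t-1)/(M-1) * (M/(γ*M-2*γ+2))
      - t/(γ*t-2*γ+2)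
      = ((2-2*γ)*(-γ)*(M-t)*(t-1)) / ((2-γ)*(γ*M-2*γ+2)*(γ*t-2*γ+2)) := by
    rw [div_mul_div_comm, div_mul_div_comm, div_add_div _ _ (mul_ne_zero hM1 h1) (mul_ne_zero hM1 h2), div_sub_div _ _ (mul_ne_zero (mul_ne_zero hM1 h1) (mul_ne_zero hM1 h2)) h3, div_eq_div_iff (mul_ne_zero (mul_ne_zero (mul_ne_zero hM1 h1) (mul_ne_zero hM1 h2)) h3) (mul_ne_zero (mul_ne_zero h1 h2) h3)]
    ring
  have hnum : 0 ≤ (2-2*γ)*(-γ)*(M-t)*(t-1) := by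
    have := mul_nonneg (mul_nonneg (by linarith : (0:ℝ) ≤ 2-2*γ) (by linarith : (0:ℝ) ≤ -γ)) (by linarith : (0:ℝ) ≤ M - t)
    nlinarith
  have hden : 0 < (2-γ)*(γ*M-2*γ+2)*(γ*t-2*γ+2) := by positivity
  have := div_nonneg hnum hden.le
  linarith [key ▸ this]

/-- for negative `γ` with `γ > -1/(n-1)`, the sum `∑ s_k/λ_k`
over positive integers summing to `m` is at most its value at the extreme
partition `(1,…,1,m-j+1)`. -/
theorem sum_sk_over_lambda_extreme_bound_neg_gamma (n m j : ℕ)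
    (hn : 2 ≤ n) (hj : 1 ≤ j) (hjm : j ≤ m) (hmn : m ≤ n)
    (γ : ℝ) (hγl : -1 < γ) (hγu : γ < 0) (hγK : γ > -1 / ((n : ℝ) - 1))
    (s : Fin j → ℕ) (hs : ∀ k, 1 ≤ s k) (hsum : ∑ k, s k = m)
    (hlampos : ∀ k, 0 < γ * (s k : ℝ) - 2 * γ + 2) :
    ∑ k, (s k : ℝ) / (γ * (s k : ℝ) - 2 * γ + 2)
      ≤ ((j : ℝ) - 1) / (2 - γ)
        + ((m : ℝ) - (j : ℝ) + 1)
          / (γ * ((m : ℝ) - (j : ℝ) + 1) - 2 * γ + 2) := by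
  have hd1 : (0:ℝ) < 2 - γ := by linarith
  set M : ℝ := (m : ℝ) - (j : ℝ) + 1 with hMdef
  -- positivity of the denominator at M
  have hn1 : (0:ℝ) < (n:ℝ) - 1 := by
    have : (2:ℝ) ≤ (n:ℝ) := by exact_mod_cast hn
    linarith
  have hγn : -1 < γ * ((n:ℝ) - 1) := by
    have := (div_lt_iff₀ hn1).mp (by linarith [hγK] : -1 / ((n:ℝ)-1) < γ)
    linarith
  have hjm' : (j:ℝ) ≤ (m:ℝ) := by exact_mod_cast hjm
  have hmn' : (m:ℝ) ≤ (n:ℝ) := by exact_mod_cast hmn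
  have hj1 : (1:ℝ) ≤ (j:ℝ) := by exact_mod_cast hj
  have hM1 : (1:ℝ) ≤ M := by simp only [hMdef]; linarith
  have hMn : M ≤ (n:ℝ) := by simp only [hMdef]; linarith
  have hdM : 0 < γ * M - 2*γ + 2 := by
    nlinarith [mul_nonneg (by linarith : (0:ℝ) ≤ -γ) (by linarith : (0:ℝ) ≤ (n:ℝ) - M)]
  -- each s k is at most M
  have hskM : ∀ k, (s k : ℝ) ≤ M := by
    intro k
    have hcard : (j - 1 : ℕ) ≤ ∑ i ∈ univ.erase k, s i := by
      calc (j - 1 : ℕ) = (univ.erase k).card := by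
            simp [Finset.card_erase_of_mem (Finset.mem_univ k)]
        _ = ∑ i ∈ univ.erase k, 1 := (Finset.card_eq_sum_ones _)
        _ ≤ ∑ i ∈ univ.erase k, s i := Finset.sum_le_sum fun i _ => hs i
    have hsplit : s k + ∑ i ∈ univ.erase k, s i = m := by
      rw [Finset.add_sum_erase _ _ (Finset.mem_univ k)]; exact hsum
    have : s k + (j - 1) ≤ m := by omega
    have : (s k : ℝ) + ((j:ℝ) - 1) ≤ (m:ℝ) := by
      have hle : s k + (j-1) ≤ m := this
      have : ((s k + (j-1) : ℕ) : ℝ) ≤ (m:ℝ) := by exact_mod_cast hle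
      push_cast [Nat.cast_sub hj] at this
      linarith
    simp only [hMdef]; linarith
  rcases eq_or_lt_of_le hjm with heq | hlt
  · -- m = j: all s k = 1, equality
    have hall : ∀ k, s k = 1 := by
      intro k
      by_contra hne
      have h2 : 2 ≤ s k := by have := hs k; omega
      have := hskM k
      simp only [hMdef, ← heq] at this
      have : (s k : ℝ) ≤ 1 := by linarith
      have : s k ≤ 1 := by exact_mod_cast this
      omega
    have hM_eq : M = 1 := by simp only [hMdef, ← heq]; ring
    rw [hM_eq]
    have hterm : ∀ k ∈ (univ : Finset (Fin j)), (s k : ℝ) / (γ * (s k : ℝ) - 2 * γ + 2)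
        = 1 / (2 - γ) := by
      intro k _
      rw [hall k]
      push_cast
      rw [show γ * (1:ℝ) - 2 * γ + 2 = 2 - γ from by ring]
    rw [Finset.sum_congr rfl hterm, Finset.sum_const, Finset.card_univ, Fintype.card_fin,
      nsmul_eq_mul, show γ * (1:ℝ) - 2 * γ + 2 = 2 - γ from by ring]
    apply le_of_eq
    field_simp
    ring
  · -- j < m : M > 1, use secant bound
    have hMgt1 : 1 < M := by
      have : (j:ℝ) + 1 ≤ (m:ℝ) := by exact_mod_cast hlt
      simp only [hMdef]; linarith
    have hbound : ∀ k, (s k : ℝ) / (γ * (s k : ℝ) - 2 * γ + 2)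
        ≤ (M - (s k:ℝ))/(M-1) * (1/(2-γ)) + ((s k:ℝ)-1)/(M-1) * (M/(γ*M-2*γ+2)) := by
      intro k
      have hk1 : (1:ℝ) ≤ (s k:ℝ) := by exact_mod_cast hs k
      exact secant_aux γ (s k) M hγu hk1 (hskM k) hMgt1 (hlampos k) hd1 hdM
    have hsum' : ∑ k, ((s k : ℕ) : ℝ) = (m : ℝ) := by
      rw [← Nat.cast_sum]; exact_mod_cast congrArg (Nat.cast : ℕ → ℝ) hsum
    calc ∑ k, (s k : ℝ) / (γ * (s k : ℝ) - 2 * γ + 2)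
        ≤ ∑ k, ((M - (s k:ℝ))/(M-1) * (1/(2-γ)) + ((s k:ℝ)-1)/(M-1) * (M/(γ*M-2*γ+2))) :=
          Finset.sum_le_sum fun k _ => hbound k
      _ = ((j:ℝ)*M - m)/(M-1) * (1/(2-γ)) + ((m:ℝ) - j)/(M-1) * (M/(γ*M-2*γ+2)) := by
          rw [Finset.sum_add_distrib]
          simp_rw [div_mul_eq_mul_div, ← Finset.sum_div, ← Finset.sum_mul,
            Finset.sum_sub_distrib, Finset.sum_const, Finset.card_univ, Fintype.card_fin,
            hsum']
          ring_nf
      _ = ((j : ℝ) - 1) / (2 - γ) + M / (γ * M - 2*γ + 2) := by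
          have hM1ne : M - 1 ≠ 0 := by linarith
          have e1 : (j:ℝ)*M - m = ((j:ℝ) - 1) * (M - 1) := by simp only [hMdef]; ring
          have e2 : (m:ℝ) - j = M - 1 := by simp only [hMdef]; ring
          rw [e1, e2, mul_div_assoc, div_self hM1ne]
          ring
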